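/- arXiv:2207.04207 — 3 statements merged into one kernel-verified Lean document; each statement's English description precedes it below -/
import Mathlib

section
/- Let N ≥ 1 and M ≥ 1 be integers and let β ∈ (0,1). There exists a constant C > 0, depending only on N and β, such that for every measurable map f : S^N → ℝ^M one has [f]_{BMO(S^N)} ≤ C · [f]_{W^{β,N/β}(S^N)} (the inequality understood in [0,∞]). -/
open MeasureTheory Metric Set ENNReal

noncomputable section

set_option maxHeartbeats 1000000

open Module

lemma my_lintegral_le {α : Type*} [MeasurableSpace α] (μ : Measure α) (f : α → ENNReal)
    {p : ℝ} (hp : 1 < p) :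
    ∫⁻ a, f a ∂μ ≤ (∫⁻ a, f a ^ p ∂μ) ^ (1/p) * (μ univ) ^ (1 - 1/p) := by
  have hp0 : (0:ℝ) < p := lt_trans one_pos hp
  have hpq : p.HolderConjugate (p/(p-1)) := Real.HolderConjugate.conjExponent hp
  have hq : 1 / (p/(p-1)) = 1 - 1/p := by
    field_simp
  rw [MeasureTheory.lintegral]
  refine iSup₂_le fun g hg => ?_
  rw [← g.lintegral_eq_lintegral]
  calc ∫⁻ a, g a ∂μ = ∫⁻ a, (⇑g * 1) a ∂μ := by simp
    _ ≤ (∫⁻ a, g a ^ p ∂μ) ^ (1/p) * (∫⁻ a, (1:ENNReal) ^ (p/(p-1)) ∂μ) ^ (1/(p/(p-1))) :=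
        ENNReal.lintegral_mul_le_Lp_mul_Lq μ hpq g.measurable.aemeasurable aemeasurable_const
    _ ≤ (∫⁻ a, f a ^ p ∂μ) ^ (1/p) * (μ univ) ^ (1 - 1/p) := by
        rw [← hq]
        have h1 : ∫⁻ (a : α), (1:ENNReal) ^ (p / (p - 1)) ∂μ ≤ μ univ := by simp
        have h2 : ∫⁻ a, g a ^ p ∂μ ≤ ∫⁻ a, f a ^ p ∂μ :=
          lintegral_mono fun a => ENNReal.rpow_le_rpow (hg a) hp0.le
        gcongr

lemma my_laverage_le {α : Type*} [MeasurableSpace α] (μ : Measure α) (f : α → ENNReal)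
    {p : ℝ} (hp : 1 < p) :
    ⨍⁻ a, f a ∂μ ≤ (⨍⁻ a, f a ^ p ∂μ) ^ (1/p) := by
  have hp0 : (0:ℝ) < p := lt_trans one_pos hp
  rw [laverage_eq, laverage_eq]
  rcases eq_or_ne (μ univ) 0 with h0 | h0
  · rw [Measure.measure_univ_eq_zero.mp h0]; simp
  rcases eq_or_ne (μ univ) ∞ with htop | htop
  · simp [htop]
  calc (∫⁻ a, f a ∂μ) / μ univ
      ≤ ((∫⁻ a, f a ^ p ∂μ) ^ (1/p) * (μ univ) ^ (1 - 1/p)) / μ univ := by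
        gcongr
        exact my_lintegral_le μ f hp
    _ = ((∫⁻ a, f a ^ p ∂μ) / μ univ) ^ (1/p) := by
        rw [ENNReal.div_rpow_of_nonneg _ _ (by positivity)]
        rw [div_eq_mul_inv, div_eq_mul_inv, mul_assoc]
        congr 1
        rw [← ENNReal.rpow_neg_one (μ univ), ← ENNReal.rpow_add _ _ h0 htop,
          ← ENNReal.rpow_neg]
        congr 1
        ring

lemma euc_ball_lower (n : ℕ) (hn : 0 < n) {ρ : ℝ} (hρ : 0 < ρ) :
    ENNReal.ofReal ((2 * (ρ / Real.sqrt n)) ^ n)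
      ≤ μH[(n:ℝ)] (ball (0 : EuclideanSpace ℝ (Fin n)) ρ) := by
  have hsn : (0:ℝ) < Real.sqrt n := Real.sqrt_pos.mpr (by exact_mod_cast hn)
  set a : ℝ := ρ / Real.sqrt n with ha
  have ha0 : 0 < a := div_pos hρ hsn
  set e := WithLp.equiv 2 (Fin n → ℝ)
  have hL : LipschitzWith 1 ⇑e := PiLp.lipschitzWith_ofLp 2 _
  have hA : AntilipschitzWith 1 ⇑e.symm := hL.to_rightInverse e.right_inv
  have hd : (0:ℝ) ≤ (n:ℝ) := by positivity
  have key : μH[(n:ℝ)] (ball (0 : Fin n → ℝ) a)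
      ≤ μH[(n:ℝ)] (⇑e.symm '' ball (0 : Fin n → ℝ) a) := by
    simpa using hA.le_hausdorffMeasure_image hd (ball (0 : Fin n → ℝ) a)
  have himg : ⇑e.symm '' ball (0 : Fin n → ℝ) a ⊆ ball (0 : EuclideanSpace ℝ (Fin n)) ρ := by
    rintro y ⟨z, hz, rfl⟩
    have hAe : dist (e.symm z) 0 ≤ _ * dist (e (e.symm z)) (e 0) :=
      (PiLp.antilipschitzWith_ofLp 2 (fun _ : Fin n => ℝ)).le_mul_dist (e.symm z) 0
    rw [mem_ball] at hz ⊢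
    have hez : e (e.symm z) = z := e.apply_symm_apply z
    have he0 : e 0 = 0 := rfl
    rw [hez, he0] at hAe
    have hK : (((Fintype.card (Fin n) : NNReal) ^ (1 / (2 : ENNReal)).toReal : NNReal) : ℝ)
        = Real.sqrt n := by
      rw [NNReal.coe_rpow, NNReal.coe_natCast, Fintype.card_fin, Real.sqrt_eq_rpow]
      norm_num
    calc dist (e.symm z) 0 ≤ Real.sqrt n * dist z 0 := by rw [← hK]; exact_mod_cast hAe
      _ < Real.sqrt n * a := by gcongr
      _ = ρ := by rw [ha]; field_simp
  calc ENNReal.ofReal ((2 * a) ^ n) = μH[(n:ℝ)] (ball (0 : Fin n → ℝ) a) := by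
        have := hausdorffMeasure_pi_real (ι := Fin n)
        rw [Fintype.card_fin] at this
        rw [this, Real.volume_pi_ball _ ha0, Fintype.card_fin]
    _ ≤ μH[(n:ℝ)] (⇑e.symm '' ball (0 : Fin n → ℝ) a) := key
    _ ≤ μH[(n:ℝ)] (ball (0 : EuclideanSpace ℝ (Fin n)) ρ) := measure_mono himg

lemma cap_ball_subset (N : ℕ) (x : EuclideanSpace ℝ (Fin (N+1)))
    (hx1 : ‖x‖ = 1) {r : ℝ} (hr0 : 0 < r) (hr1 : r ≤ 1) :
    Metric.ball (0 : (ℝ ∙ x)ᗮ) (r/2) ⊆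
      ⇑(Submodule.orthogonalProjectionOnto (ℝ ∙ x)ᗮ) ''
        (Metric.sphere (0 : EuclideanSpace ℝ (Fin (N+1))) 1 ∩ ball x r) := by
  have hxKo : x ∈ ((ℝ ∙ x)ᗮ)ᗮ :=
    Submodule.le_orthogonal_orthogonal _ (Submodule.mem_span_singleton_self x)
  intro v hv
  rw [mem_ball_zero_iff] at hv
  have hvle : ‖(v : EuclideanSpace ℝ (Fin (N+1)))‖ < r / 2 := hv
  have hvle1 : ‖(v : EuclideanSpace ℝ (Fin (N+1)))‖ ≤ 1 / 2 := by linarith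
  have hvnn : (0:ℝ) ≤ ‖(v : EuclideanSpace ℝ (Fin (N+1)))‖ := norm_nonneg _
  set w : EuclideanSpace ℝ (Fin (N+1)) := (v : EuclideanSpace ℝ (Fin (N+1))) with hw
  set t := Real.sqrt (1 - ‖w‖ ^ 2) with ht
  have h1v : 0 ≤ 1 - ‖w‖ ^ 2 := by nlinarith
  have ht2 : t ^ 2 = 1 - ‖w‖ ^ 2 := Real.sq_sqrt h1v
  have ht0 : 0 ≤ t := Real.sqrt_nonneg _
  have ht1 : t ≤ 1 := by nlinarith
  have hinner : (inner ℝ x w : ℝ) = 0 :=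
    Submodule.mem_orthogonal_singleton_iff_inner_right.mp v.2
  have hyin : (inner ℝ w (t • x) : ℝ) = 0 := by
    rw [real_inner_smul_right, real_inner_comm, hinner, mul_zero]
  have hynorm : ‖w + t • x‖ ^ 2 = 1 := by
    rw [norm_add_sq_real, hyin, norm_smul, Real.norm_eq_abs, abs_of_nonneg ht0, hx1]
    nlinarith
  have hy1 : ‖w + t • x‖ = 1 := by nlinarith [norm_nonneg (w + t • x)]
  have hdist : ‖w + t • x - x‖ < r := by
    have he : w + t • x - x = w + (t - 1) • x := by
      rw [sub_smul, one_smul]; abel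
    have hyin2 : (inner ℝ w ((t - 1) • x) : ℝ) = 0 := by
      rw [real_inner_smul_right, real_inner_comm, hinner, mul_zero]
    have hsq : ‖w + t • x - x‖ ^ 2 < r ^ 2 := by
      rw [he, norm_add_sq_real, hyin2, norm_smul, Real.norm_eq_abs, hx1]
      have habs : |t - 1| = 1 - t := by rw [abs_of_nonpos (by linarith)]; ring
      rw [habs]
      have h1t : 1 - t ≤ ‖w‖ ^ 2 := by nlinarith
      nlinarith
    exact lt_of_pow_lt_pow_left₀ 2 hr0.le hsq
  refine ⟨w + t • x, ⟨?_, ?_⟩, ?_⟩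
  · simpa [mem_sphere_zero_iff_norm] using hy1
  · rwa [mem_ball_iff_norm]
  · rw [map_add, _root_.map_smul, Submodule.orthogonalProjectionOnto_mem_subspace_eq_self,
      Submodule.orthogonalProjectionOnto_apply_of_mem_orthogonal hxKo, smul_zero, add_zero]

lemma cap_lower (N : ℕ) (hN : 1 ≤ N) (x : EuclideanSpace ℝ (Fin (N+1)))
    (hx1 : ‖x‖ = 1) {r : ℝ} (hr0 : 0 < r) (hr1 : r ≤ 1) :
    ENNReal.ofReal ((2 * (r / 2 / Real.sqrt N)) ^ N)
      ≤ μH[(N:ℝ)] (Metric.sphere (0 : EuclideanSpace ℝ (Fin (N+1))) 1 ∩ ball x r) := by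
  have hd : (0:ℝ) ≤ (N:ℝ) := by positivity
  have hxne : x ≠ 0 := by intro h; rw [h] at hx1; simp at hx1
  have hfr : finrank ℝ ((ℝ ∙ x)ᗮ) = N := by
    have h1 : finrank ℝ (ℝ ∙ x) = 1 := finrank_span_singleton hxne
    have h2 := Submodule.finrank_add_finrank_orthogonal (K := (ℝ ∙ x))
    rw [h1, finrank_euclideanSpace_fin] at h2
    omega
  set P := Submodule.orthogonalProjectionOnto (ℝ ∙ x)ᗮ with hP
  have hPlip : LipschitzWith 1 ⇑P := by
    refine LipschitzWith.weaken P.lipschitz ?_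
    rw [← NNReal.coe_le_coe]
    exact_mod_cast Submodule.orthogonalProjectionOnto_norm_le (ℝ ∙ x)ᗮ
  set φ := (stdOrthonormalBasis ℝ ((ℝ ∙ x)ᗮ)).repr with hφ
  have hiso := φ.isometry.hausdorffMeasure_image (Or.inl hd) (Metric.ball (0 : (ℝ ∙ x)ᗮ) (r/2))
  have himg : ⇑φ '' Metric.ball (0 : (ℝ ∙ x)ᗮ) (r/2) = Metric.ball (φ 0) (r/2) :=
    φ.image_ball 0 (r/2)
  have hball := euc_ball_lower (finrank ℝ ((ℝ ∙ x)ᗮ)) (by omega) (half_pos hr0)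
  rw [map_zero] at himg
  calc ENNReal.ofReal ((2 * (r / 2 / Real.sqrt N)) ^ N)
      = ENNReal.ofReal ((2 * (r / 2 / Real.sqrt (finrank ℝ ((ℝ ∙ x)ᗮ)))) ^ (finrank ℝ ((ℝ ∙ x)ᗮ))) := by
        rw [hfr]
    _ ≤ μH[((finrank ℝ ((ℝ ∙ x)ᗮ) : ℕ):ℝ)]
          (Metric.ball (0 : EuclideanSpace ℝ (Fin (finrank ℝ ((ℝ ∙ x)ᗮ)))) (r/2)) := hball
    _ = μH[(N:ℝ)] (Metric.ball (0 : EuclideanSpace ℝ (Fin (finrank ℝ ((ℝ ∙ x)ᗮ)))) (r/2)) := by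
        rw [hfr]
    _ = μH[(N:ℝ)] (Metric.ball (0 : (ℝ ∙ x)ᗮ) (r/2)) := by rw [← himg, hiso]
    _ ≤ μH[(N:ℝ)] (⇑P '' (Metric.sphere (0 : EuclideanSpace ℝ (Fin (N+1))) 1 ∩ ball x r)) :=
        measure_mono (cap_ball_subset N x hx1 hr0 hr1)
    _ ≤ 1 ^ (N:ℝ) * μH[(N:ℝ)] (Metric.sphere (0 : EuclideanSpace ℝ (Fin (N+1))) 1 ∩ ball x r) := by
        simpa using hPlip.hausdorffMeasure_image_le hd _
    _ = μH[(N:ℝ)] (Metric.sphere (0 : EuclideanSpace ℝ (Fin (N+1))) 1 ∩ ball x r) := by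
        rw [ENNReal.one_rpow, one_mul]

/-- The unit sphere `S^N ⊆ ℝ^{N+1}`. -/
def sphN (N : ℕ) : Set (EuclideanSpace ℝ (Fin (N + 1))) := Metric.sphere 0 1

/-- The `N`-dimensional surface (Hausdorff) measure on `ℝ^{N+1}`. -/
def surf (N : ℕ) : Measure (EuclideanSpace ℝ (Fin (N + 1))) := μH[(N : ℝ)]

/-- The BMO seminorm of `f : S^N → ℝ^M`. -/
def bmoSem (N M : ℕ) (f : EuclideanSpace ℝ (Fin (N + 1)) → EuclideanSpace ℝ (Fin M)) : ℝ≥0∞ :=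
  ⨆ (x : EuclideanSpace ℝ (Fin (N + 1))) (_ : x ∈ sphN N) (r : ℝ) (_ : 0 < r),
    ⨍⁻ θ in sphN N ∩ Metric.ball x r,
      (⨍⁻ σ in sphN N ∩ Metric.ball x r, ENNReal.ofReal ‖f θ - f σ‖ ∂(surf N)) ∂(surf N)

/-- The Gagliardo seminorm `[f]_{W^{β,p}(S^N)}`, with values in `[0,∞]`. -/
def gagliardoS (N M : ℕ) (β p : ℝ)
    (f : EuclideanSpace ℝ (Fin (N + 1)) → EuclideanSpace ℝ (Fin M)) : ℝ≥0∞ :=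
  (∫⁻ x in sphN N, ∫⁻ y in sphN N,
      ENNReal.ofReal ‖f x - f y‖ ^ p / ENNReal.ofReal (dist x y ^ ((N : ℝ) + β * p))
        ∂(surf N) ∂(surf N)) ^ (1 / p)

/-- The BMO seminorm on the sphere is controlled by the critical Gagliardo seminorm
`[f]_{W^{β,N/β}(S^N)}`. -/
theorem bmo_le_gagliardo (N : ℕ) (hN : 1 ≤ N) (β : ℝ) (hβ0 : 0 < β) (hβ1 : β < 1) :
    ∃ C > (0 : ℝ), ∀ (M : ℕ), 1 ≤ M →
      ∀ f : EuclideanSpace ℝ (Fin (N + 1)) → EuclideanSpace ℝ (Fin M), Measurable f →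
        bmoSem N M f ≤ ENNReal.ofReal C * gagliardoS N M β ((N : ℝ) / β) f := by
  classical
  set p : ℝ := (N : ℝ) / β with hpdef
  have hN1 : (1:ℝ) ≤ (N:ℝ) := by exact_mod_cast hN
  have hp1 : 1 < p := by
    rw [hpdef, lt_div_iff₀ hβ0, one_mul]
    linarith
  have hp0 : (0:ℝ) < p := lt_trans one_pos hp1
  set e : ℝ := (N : ℝ) + β * p with hedef
  have he : e = ((2 * N : ℕ) : ℝ) := by
    rw [hedef, hpdef]
    push_cast
    field_simp
    ring
  set C : ℝ := max 1 ((4:ℝ) ^ N * (N:ℝ) ^ N) with hC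
  have hC1 : (1:ℝ) ≤ C := le_max_left _ _
  have hC0 : (0:ℝ) < C := lt_of_lt_of_le one_pos hC1
  refine ⟨C, hC0, fun M hM f hf => ?_⟩
  rw [bmoSem]
  refine iSup₂_le fun x hx => iSup₂_le fun r hr => ?_
  -- notation
  set A : Set (EuclideanSpace ℝ (Fin (N + 1))) := sphN N ∩ Metric.ball x r with hA
  have hAmeas : MeasurableSet A :=
    (Metric.isClosed_sphere.measurableSet).inter measurableSet_ball
  set g : EuclideanSpace ℝ (Fin (N + 1)) → EuclideanSpace ℝ (Fin (N + 1)) → ENNReal :=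
    fun θ σ => ENNReal.ofReal ‖f θ - f σ‖ with hg
  set m : ENNReal := surf N A with hm
  set s : ℝ := min r 1 with hs
  have hs0 : 0 < s := lt_min hr one_pos
  have hs1 : s ≤ 1 := min_le_right _ _
  set q : ℝ := (s / Real.sqrt N) ^ N with hq
  have hsqrtN : (0:ℝ) < Real.sqrt N := Real.sqrt_pos.mpr (by positivity)
  have hq0 : 0 < q := by positivity
  -- lower bound on the measure of the cap
  have hx1 : ‖x‖ = 1 := by simpa [sphN] using hx
  have hcap : ENNReal.ofReal q ≤ m := by
    have h1 := cap_lower N hN x hx1 hs0 hs1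
    have h2 : 2 * (s / 2 / Real.sqrt N) = s / Real.sqrt N := by ring
    rw [h2] at h1
    refine le_trans h1 (le_trans (measure_mono ?_) le_rfl)
    rw [hA, sphN]
    exact inter_subset_inter_right _ (Metric.ball_subset_ball (min_le_left _ _))
  have hm0 : m ≠ 0 := by
    intro h
    rw [h, le_zero_iff, ENNReal.ofReal_eq_zero] at hcap
    linarith
  -- pointwise bound on A × A
  have hdist2 : ∀ θ ∈ A, ∀ σ ∈ A, dist θ σ ≤ 2 * s := by
    intro θ hθ σ hσ
    rcases le_total r 1 with h | h
    · have : s = r := min_eq_left h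
      rw [this]
      calc dist θ σ ≤ dist θ x + dist x σ := dist_triangle _ _ _
        _ ≤ r + r := by
            refine add_le_add (le_of_lt hθ.2) ?_
            rw [dist_comm]; exact le_of_lt hσ.2
        _ = 2 * r := by ring
    · have : s = 1 := min_eq_right h
      rw [this]
      have hθ1 : ‖θ‖ = 1 := by simpa [sphN] using hθ.1
      have hσ1 : ‖σ‖ = 1 := by simpa [sphN] using hσ.1
      calc dist θ σ = ‖θ - σ‖ := dist_eq_norm _ _
        _ ≤ ‖θ‖ + ‖σ‖ := norm_sub_le _ _
        _ = 2 * 1 := by rw [hθ1, hσ1]; ring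
  have he0 : (0:ℝ) ≤ e := by rw [he]; positivity
  have hpt : ∀ θ ∈ A, ∀ σ ∈ A, g θ σ ^ p ≤
      ENNReal.ofReal ((2*s) ^ e) * (g θ σ ^ p / ENNReal.ofReal (dist θ σ ^ e)) := by
    intro θ hθ σ hσ
    rcases eq_or_ne θ σ with rfl | hne
    · have : g θ θ = 0 := by simp [hg]
      rw [this, ENNReal.zero_rpow_of_pos hp0]
      simp
    · have hd0 : 0 < dist θ σ := dist_pos.mpr hne
      have hden0 : ENNReal.ofReal (dist θ σ ^ e) ≠ 0 := by
        simp only [ne_eq, ENNReal.ofReal_eq_zero, not_le]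
        positivity
      have hdent : ENNReal.ofReal (dist θ σ ^ e) ≠ ⊤ := ENNReal.ofReal_ne_top
      calc g θ σ ^ p
          = ENNReal.ofReal (dist θ σ ^ e) * (g θ σ ^ p / ENNReal.ofReal (dist θ σ ^ e)) := by
            rw [ENNReal.mul_div_cancel hden0 hdent]
        _ ≤ ENNReal.ofReal ((2*s) ^ e) * (g θ σ ^ p / ENNReal.ofReal (dist θ σ ^ e)) := by
            gcongr
            exact hdist2 θ hθ σ hσ
  -- Jensen twice
  set c : ENNReal := ENNReal.ofReal ((2*s) ^ e) with hc
  have hcnet : c ≠ ⊤ := ENNReal.ofReal_ne_top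
  set Ith : EuclideanSpace ℝ (Fin (N + 1)) → ENNReal := fun θ =>
    ∫⁻ σ in sphN N, g θ σ ^ p / ENNReal.ofReal (dist θ σ ^ e) ∂(surf N) with hIth
  set J : ENNReal := ∫⁻ θ in sphN N, Ith θ ∂(surf N) with hJ
  -- inner integral bound
  have hinner : ∀ θ ∈ A, ∫⁻ σ in A, g θ σ ^ p ∂(surf N) ≤ c * Ith θ := by
    intro θ hθ
    calc ∫⁻ σ in A, g θ σ ^ p ∂(surf N)
        ≤ ∫⁻ σ in A, c * (g θ σ ^ p / ENNReal.ofReal (dist θ σ ^ e)) ∂(surf N) := by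
          refine lintegral_mono_ae ?_
          exact (ae_restrict_mem hAmeas).mono fun σ hσ => hpt θ hθ σ hσ
      _ ≤ ∫⁻ σ in sphN N, c * (g θ σ ^ p / ENNReal.ofReal (dist θ σ ^ e)) ∂(surf N) :=
          lintegral_mono_set inter_subset_left
      _ = c * Ith θ := lintegral_const_mul' _ _ hcnet
  -- step 1: double Jensen
  have step1 : (⨍⁻ θ in A, (⨍⁻ σ in A, g θ σ ∂(surf N)) ∂(surf N)) ≤
      (⨍⁻ θ in A, (⨍⁻ σ in A, g θ σ ^ p ∂(surf N)) ∂(surf N)) ^ (1/p) := by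
    calc (⨍⁻ θ in A, (⨍⁻ σ in A, g θ σ ∂(surf N)) ∂(surf N))
        ≤ (⨍⁻ θ in A, (⨍⁻ σ in A, g θ σ ∂(surf N)) ^ p ∂(surf N)) ^ (1/p) :=
          my_laverage_le _ _ hp1
      _ ≤ (⨍⁻ θ in A, (⨍⁻ σ in A, g θ σ ^ p ∂(surf N)) ∂(surf N)) ^ (1/p) := by
          refine ENNReal.rpow_le_rpow ?_ (by positivity)
          rw [setLAverage_eq, setLAverage_eq]
          refine ENNReal.div_le_div_right (lintegral_mono fun θ => ?_) _
          calc (⨍⁻ σ in A, g θ σ ∂(surf N)) ^ p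
              ≤ ((⨍⁻ σ in A, g θ σ ^ p ∂(surf N)) ^ (1/p)) ^ p :=
                ENNReal.rpow_le_rpow (my_laverage_le _ _ hp1) hp0.le
            _ = ⨍⁻ σ in A, g θ σ ^ p ∂(surf N) := by
                rw [← ENNReal.rpow_mul, one_div_mul_cancel hp0.ne', ENNReal.rpow_one]
  -- step 2: bound the double average of g^p
  have step2 : (⨍⁻ θ in A, (⨍⁻ σ in A, g θ σ ^ p ∂(surf N)) ∂(surf N)) ≤
      c * m⁻¹ * m⁻¹ * J := by
    rw [setLAverage_eq]
    have h1 : ∫⁻ θ in A, (⨍⁻ σ in A, g θ σ ^ p ∂(surf N)) ∂(surf N) ≤ (c * m⁻¹) * J := by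
      calc ∫⁻ θ in A, (⨍⁻ σ in A, g θ σ ^ p ∂(surf N)) ∂(surf N)
          ≤ ∫⁻ θ in A, (c * m⁻¹) * Ith θ ∂(surf N) := by
            refine lintegral_mono_ae ?_
            refine (ae_restrict_mem hAmeas).mono fun θ hθ => ?_
            rw [setLAverage_eq, div_eq_mul_inv, ← hm]
            calc (∫⁻ σ in A, g θ σ ^ p ∂(surf N)) * m⁻¹
                ≤ (c * Ith θ) * m⁻¹ := mul_le_mul_left (hinner θ hθ) _
              _ = (c * m⁻¹) * Ith θ := by ring
        _ ≤ ∫⁻ θ in sphN N, (c * m⁻¹) * Ith θ ∂(surf N) :=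
            lintegral_mono_set inter_subset_left
        _ = (c * m⁻¹) * J :=
            lintegral_const_mul' _ _ (ENNReal.mul_ne_top hcnet (ENNReal.inv_ne_top.mpr hm0))
    calc (∫⁻ θ in A, (⨍⁻ σ in A, g θ σ ^ p ∂(surf N)) ∂(surf N)) / surf N A
        ≤ ((c * m⁻¹) * J) / m := by
          rw [← hm]; exact ENNReal.div_le_div_right h1 _
      _ = c * m⁻¹ * m⁻¹ * J := by
          rw [div_eq_mul_inv]; ring
  -- step 3: the constant
  have hfactor : c * m⁻¹ * m⁻¹ ≤ ENNReal.ofReal C := by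
    have hD : (2*s) ^ e * (q⁻¹ * q⁻¹) ≤ C := by
      have hrpow : (2*s) ^ e = (2*s) ^ (2*N) := by
        rw [he, Real.rpow_natCast]
      rw [hrpow, hq]
      have e1 : (2*s) ^ (2*N) = 4 ^ N * (s ^ N) ^ 2 := by
        calc (2*s) ^ (2*N) = ((2*s) ^ 2) ^ N := by rw [← pow_mul, mul_comm 2 N, pow_mul]
          _ = (4 * s ^ 2) ^ N := by ring_nf
          _ = 4 ^ N * (s ^ 2) ^ N := mul_pow _ _ _
          _ = 4 ^ N * (s ^ N) ^ 2 := by rw [← pow_mul, mul_comm 2 N, pow_mul]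
      have e2 : ((s / Real.sqrt N) ^ N) = s ^ N / (Real.sqrt N) ^ N := div_pow _ _ _
      have e3 : ((Real.sqrt N) ^ N) ^ 2 = (N:ℝ) ^ N := by
        rw [← pow_mul, mul_comm N 2, pow_mul, Real.sq_sqrt (by positivity)]
      have hsN : (0:ℝ) < s ^ N := by positivity
      have hsqN : (0:ℝ) < (Real.sqrt N) ^ N := by positivity
      rw [e1, e2]
      calc 4 ^ N * (s ^ N) ^ 2 * ((s ^ N / (Real.sqrt N) ^ N)⁻¹ * (s ^ N / (Real.sqrt N) ^ N)⁻¹)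
          = 4 ^ N * (N:ℝ) ^ N := by
            rw [← e3]; field_simp
        _ ≤ C := le_max_right _ _
    calc c * m⁻¹ * m⁻¹
        ≤ c * (ENNReal.ofReal q)⁻¹ * (ENNReal.ofReal q)⁻¹ := by
          gcongr <;> exact ENNReal.inv_le_inv' hcap
      _ = ENNReal.ofReal ((2*s) ^ e * (q⁻¹ * q⁻¹)) := by
          rw [← ENNReal.ofReal_inv_of_pos hq0, hc, ← ENNReal.ofReal_mul (by positivity),
            ← ENNReal.ofReal_mul (by positivity)]
          ring_nf
      _ ≤ ENNReal.ofReal C := ENNReal.ofReal_le_ofReal hD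
  -- combine
  calc (⨍⁻ θ in A, (⨍⁻ σ in A, g θ σ ∂(surf N)) ∂(surf N))
      ≤ (c * m⁻¹ * m⁻¹ * J) ^ (1/p) :=
        le_trans step1 (ENNReal.rpow_le_rpow step2 (by positivity))
    _ = (c * m⁻¹ * m⁻¹) ^ (1/p) * J ^ (1/p) :=
        ENNReal.mul_rpow_of_nonneg _ _ (by positivity)
    _ ≤ (ENNReal.ofReal C ^ p) ^ (1/p) * J ^ (1/p) := by
        gcongr
        calc c * m⁻¹ * m⁻¹ ≤ ENNReal.ofReal C := hfactor
          _ = ENNReal.ofReal C ^ (1:ℝ) := (ENNReal.rpow_one _).symm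
          _ ≤ ENNReal.ofReal C ^ p := by
            refine ENNReal.rpow_le_rpow_of_exponent_le ?_ hp1.le
            rw [← ENNReal.ofReal_one]
            exact ENNReal.ofReal_le_ofReal hC1
    _ = ENNReal.ofReal C * gagliardoS N M β p f := by
        rw [← ENNReal.rpow_mul, mul_one_div_cancel hp0.ne', ENNReal.rpow_one]
        rw [gagliardoS]
end
end

section
/- Let N ≥ 1 and M ≥ 1 be integers and let 0 < γ < β ≤ 1. For every bounded measurable map h : ℝ^N → ℝ^M one has the interpolation inequality [h]_{W^{γ,N/γ}(ℝ^N)} ≤ (2‖h‖_{L^∞(ℝ^N)})^{1−γ/β} · [h]_{W^{β,N/β}(ℝ^N)}^{γ/β} (the inequality understood in [0,∞]). -/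
open MeasureTheory Metric Set ENNReal

noncomputable section

/-- The Gagliardo seminorm `[h]_{W^{β,p}(ℝ^N)}`, with values in `[0,∞]`. -/
def gagliardoE (N M : ℕ) (β p : ℝ)
    (h : EuclideanSpace ℝ (Fin N) → EuclideanSpace ℝ (Fin M)) : ℝ≥0∞ :=
  (∫⁻ x, ∫⁻ y,
      ENNReal.ofReal ‖h x - h y‖ ^ p / ENNReal.ofReal (dist x y ^ ((N : ℝ) + β * p))) ^ (1 / p)

/-- Interpolation of critical Gagliardo seminorms:
`[h]_{W^{γ,N/γ}} ≤ (2‖h‖_∞)^{1-γ/β} [h]_{W^{β,N/β}}^{γ/β}` for `0 < γ < β ≤ 1`. -/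
theorem gagliardo_interpolation (N M : ℕ) (hN : 1 ≤ N) (hM : 1 ≤ M)
    (γ β : ℝ) (hγ : 0 < γ) (hγβ : γ < β) (hβ : β ≤ 1)
    (h : EuclideanSpace ℝ (Fin N) → EuclideanSpace ℝ (Fin M))
    (hmeas : Measurable h) (hbd : ∃ R : ℝ, ∀ x, ‖h x‖ ≤ R) :
    gagliardoE N M γ ((N : ℝ) / γ) h ≤
      (2 * eLpNorm h ⊤ volume) ^ (1 - γ / β) *
        gagliardoE N M β ((N : ℝ) / β) h ^ (γ / β) := by
  obtain ⟨R, hR⟩ := hbd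
  have hβ0 : (0:ℝ) < β := hγ.trans hγβ
  have hN1 : (1:ℝ) ≤ N := by exact_mod_cast hN
  have hN0 : (0:ℝ) < N := lt_of_lt_of_le one_pos hN1
  set p : ℝ := (N:ℝ)/γ with hp
  set q : ℝ := (N:ℝ)/β with hq
  have hp0 : 0 < p := div_pos hN0 hγ
  have hq0 : 0 < q := div_pos hN0 hβ0
  have hqp : q ≤ p := by
    rw [hp, hq]
    exact div_le_div_of_nonneg_left hN0.le hγ hγβ.le
  have hexpγ : (N:ℝ) + γ * p = 2*N := by rw [hp]; field_simp; ring
  have hexpβ : (N:ℝ) + β * q = 2*N := by rw [hq]; field_simp; ring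
  set E := eLpNorm h ⊤ volume with hE
  have hEfin : E ≠ ∞ := by
    have hle : E ≤ ENNReal.ofReal R := by
      calc E ≤ volume (univ : Set (EuclideanSpace ℝ (Fin N))) ^ (⊤:ℝ≥0∞).toReal⁻¹ *
        ENNReal.ofReal R := eLpNorm_le_of_ae_bound (ae_of_all _ hR)
      _ = ENNReal.ofReal R := by simp
    exact ne_top_of_le_ne_top ofReal_ne_top hle
  set K := 2 * E with hK
  have hKfin : K ≠ ∞ := by
    rw [hK]
    exact ENNReal.mul_ne_top (by simp) hEfin
  have hKC : K ^ (p - q) ≠ ∞ := ENNReal.rpow_ne_top_of_nonneg (by linarith) hKfin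
  have hb : ∀ᵐ x, (‖h x‖₊ : ℝ≥0∞) ≤ E := by
    rw [hE, eLpNorm_exponent_top]
    exact ae_le_eLpNormEssSup
  have main : (∫⁻ x, ∫⁻ y, ENNReal.ofReal ‖h x - h y‖ ^ p /
        ENNReal.ofReal (dist x y ^ (2*(N:ℝ)))) ≤
      K ^ (p - q) * ∫⁻ x, ∫⁻ y, ENNReal.ofReal ‖h x - h y‖ ^ q /
        ENNReal.ofReal (dist x y ^ (2*(N:ℝ))) := by
    rw [← lintegral_const_mul' _ _ hKC]
    refine lintegral_mono_ae ?_
    filter_upwards [hb] with x hx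
    rw [← lintegral_const_mul' _ _ hKC]
    refine lintegral_mono_ae ?_
    filter_upwards [hb] with y hy
    set a := ENNReal.ofReal ‖h x - h y‖ with ha
    have haK : a ≤ K := by
      rw [ha, ofReal_norm, enorm_eq_nnnorm]
      calc (‖h x - h y‖₊ : ℝ≥0∞) ≤ (‖h x‖₊ : ℝ≥0∞) + (‖h y‖₊ : ℝ≥0∞) := by
            exact_mod_cast nnnorm_sub_le _ _
      _ ≤ E + E := add_le_add hx hy
      _ = K := (two_mul E).symm
    have hap : a ^ p ≤ K ^ (p-q) * a ^ q := by
      have h1 : a ^ p = a ^ (p - q) * a ^ q := by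
        rw [← ENNReal.rpow_add_of_nonneg _ _ (by linarith) hq0.le]
        ring_nf
      rw [h1]
      exact mul_le_mul_left (ENNReal.rpow_le_rpow haK (by linarith)) _
    calc a ^ p / ENNReal.ofReal (dist x y ^ (2*(N:ℝ)))
        ≤ (K ^ (p-q) * a ^ q) / ENNReal.ofReal (dist x y ^ (2*(N:ℝ))) :=
          ENNReal.div_le_div_right hap _
      _ = K ^ (p-q) * (a ^ q / ENNReal.ofReal (dist x y ^ (2*(N:ℝ)))) :=
          mul_div_assoc _ _ _
  simp only [gagliardoE, hexpγ, hexpβ]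
  calc (∫⁻ x, ∫⁻ y, ENNReal.ofReal ‖h x - h y‖ ^ p /
          ENNReal.ofReal (dist x y ^ (2*(N:ℝ)))) ^ (1/p)
      ≤ (K ^ (p - q) * ∫⁻ x, ∫⁻ y, ENNReal.ofReal ‖h x - h y‖ ^ q /
          ENNReal.ofReal (dist x y ^ (2*(N:ℝ)))) ^ (1/p) :=
        ENNReal.rpow_le_rpow main (by positivity)
    _ = (K ^ (p - q)) ^ (1/p) * ((∫⁻ x, ∫⁻ y, ENNReal.ofReal ‖h x - h y‖ ^ q /
          ENNReal.ofReal (dist x y ^ (2*(N:ℝ))))) ^ (1/p) :=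
        ENNReal.mul_rpow_of_nonneg _ _ (by positivity)
    _ = K ^ (1 - γ/β) * (((∫⁻ x, ∫⁻ y, ENNReal.ofReal ‖h x - h y‖ ^ q /
          ENNReal.ofReal (dist x y ^ (2*(N:ℝ))))) ^ (1/q)) ^ (γ/β) := by
        rw [← ENNReal.rpow_mul, ← ENNReal.rpow_mul]
        congr 1
        · congr 1
          rw [hp, hq]; field_simp
        · congr 1
          rw [hp, hq]; field_simp
end
end

section
/- Let M₀ ≥ 2 and M₁ ≥ 2 be real numbers. Define σ(α) := max{ M₀/(M₀+1) + max( 1/(M₀+1) − α/M₀ , 0 ), M₁/(M₁+1) + max( α/M₁ − 1/(M₁(M₁+1)) , 0 ) } for α ∈ (0,1). Then the infimum of σ(α) over α ∈ (0,1) equals (M₀ + M₁ − 1)/(M₀ + M₁) = 1 − 1/(M₀ + M₁), and it is attained at α = M₀/(M₀ + M₁). -/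
open Set

/-- The function `σ(α)` arising in the main integral estimate. -/
noncomputable def sigmaThreshold (M₀ M₁ α : ℝ) : ℝ :=
  max (M₀ / (M₀ + 1) + max (1 / (M₀ + 1) - α / M₀) 0)
    (M₁ / (M₁ + 1) + max (α / M₁ - 1 / (M₁ * (M₁ + 1))) 0)

/-- `inf_{α ∈ (0,1)} σ(α) = (M₀+M₁-1)/(M₀+M₁) = 1 - 1/(M₀+M₁)`, attained at
`α = M₀/(M₀+M₁)`. -/
theorem sigma_inf_eq (M₀ M₁ : ℝ) (hM₀ : 2 ≤ M₀) (hM₁ : 2 ≤ M₁) :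
    sInf (sigmaThreshold M₀ M₁ '' Set.Ioo (0 : ℝ) 1) = (M₀ + M₁ - 1) / (M₀ + M₁) ∧
    (M₀ + M₁ - 1) / (M₀ + M₁) = 1 - 1 / (M₀ + M₁) ∧
    M₀ / (M₀ + M₁) ∈ Set.Ioo (0 : ℝ) 1 ∧
    sigmaThreshold M₀ M₁ (M₀ / (M₀ + M₁)) = (M₀ + M₁ - 1) / (M₀ + M₁) := by
  have h0 : (0:ℝ) < M₀ := by linarith
  have h1 : (0:ℝ) < M₁ := by linarith
  have hs : (0:ℝ) < M₀ + M₁ := by linarith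
  have h0' : (0:ℝ) < M₀ + 1 := by linarith
  have h1' : (0:ℝ) < M₁ + 1 := by linarith
  have hαmem : M₀ / (M₀ + M₁) ∈ Set.Ioo (0:ℝ) 1 := by
    constructor
    · positivity
    · rw [div_lt_one hs]; linarith
  -- value at the optimum
  have hval : sigmaThreshold M₀ M₁ (M₀ / (M₀ + M₁)) = (M₀ + M₁ - 1) / (M₀ + M₁) := by
    unfold sigmaThreshold
    have e1 : 1 / (M₀ + 1) - (M₀ / (M₀ + M₁)) / M₀ = (M₁ - 1) / ((M₀ + 1) * (M₀ + M₁)) := by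
      field_simp; ring
    have e2 : (M₀ / (M₀ + M₁)) / M₁ - 1 / (M₁ * (M₁ + 1))
        = (M₀ - 1) / ((M₁ + 1) * (M₀ + M₁)) := by
      field_simp; ring
    have hA : (0:ℝ) ≤ (M₁ - 1) / ((M₀ + 1) * (M₀ + M₁)) :=
      div_nonneg (by linarith) (by positivity)
    have hB : (0:ℝ) ≤ (M₀ - 1) / ((M₁ + 1) * (M₀ + M₁)) :=
      div_nonneg (by linarith) (by positivity)
    rw [e1, e2, max_eq_left hA, max_eq_left hB]
    have eA : M₀ / (M₀ + 1) + (M₁ - 1) / ((M₀ + 1) * (M₀ + M₁)) = (M₀ + M₁ - 1) / (M₀ + M₁) := by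
      field_simp; ring
    have eB : M₁ / (M₁ + 1) + (M₀ - 1) / ((M₁ + 1) * (M₀ + M₁))
        = (M₀ + M₁ - 1) / (M₀ + M₁) := by
      field_simp; ring
    rw [eA, eB, max_self]

  -- lower bound
  have hlb : ∀ β ∈ Set.Ioo (0:ℝ) 1, (M₀ + M₁ - 1) / (M₀ + M₁) ≤ sigmaThreshold M₀ M₁ β := by
    intro β hβ
    obtain ⟨hβ0, hβ1⟩ := hβ
    unfold sigmaThreshold
    by_cases hc : β ≤ M₀ / (M₀ + M₁)
    · refine le_trans ?_ (le_max_left _ _)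
      refine le_trans ?_ (add_le_add (le_refl _) (le_max_left _ _))
      have hβM : β / M₀ ≤ 1 / (M₀ + M₁) := by
        rw [div_le_div_iff₀ h0 hs]
        have := (le_div_iff₀ hs).mp hc
        linarith
      have ha : M₀ / (M₀ + 1) + 1 / (M₀ + 1) = 1 := by field_simp
      have hb : (M₀ + M₁ - 1) / (M₀ + M₁) = 1 - 1 / (M₀ + M₁) := by field_simp
      linarith
    · push_neg at hc
      refine le_trans ?_ (le_max_right _ _)
      refine le_trans ?_ (add_le_add (le_refl _) (le_max_left _ _))
      have hkey : (1 - β) / M₁ ≤ 1 / (M₀ + M₁) := by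
        rw [div_le_div_iff₀ h1 hs]
        have := (div_lt_iff₀ hs).mp hc
        linarith
      have ha : M₁ / (M₁ + 1) - 1 / (M₁ * (M₁ + 1)) = 1 - 1 / M₁ := by field_simp; ring
      have hb : (M₀ + M₁ - 1) / (M₀ + M₁) = 1 - 1 / (M₀ + M₁) := by field_simp
      have hc' : (1 - β) / M₁ = 1 / M₁ - β / M₁ := by ring
      linarith
  refine ⟨?_, by field_simp, hαmem, hval⟩
  apply le_antisymm
  · exact csInf_le ⟨_, fun x ⟨β, hβ, hx⟩ => hx ▸ hlb β hβ⟩ ⟨_, hαmem, hval⟩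
  · exact le_csInf ⟨_, ⟨_, hαmem, rfl⟩⟩ (fun x ⟨β, hβ, hx⟩ => hx ▸ hlb β hβ)
end
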